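/- Let A be an associative unital ℚ-algebra which is a division ring with center equal to ℚ and of dimension 9 over ℚ, and let G be a finite group admitting an injective group homomorphism into the group Aˣ/ℚˣ. Then G is isomorphic to a subgroup of μ_3 × μ_3; in particular, G is abelian, its order divides 9, and its exponent divides 3. -/

import Mathlib

open Module

/-! ### Rational arithmetic helpers -/

lemma q_cube_one {q : ℚ} (h : q ^ 3 = 1) : q = 1 := by
  nlinarith [sq_nonneg (q - 1), sq_nonneg (q + 1), sq_nonneg q]

lemma rat_coeffs {q c0 c1 c2 : ℚ} (hnc : ¬ ∃ t : ℚ, t ^ 3 = q)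
    (h1 : c0 ^ 2 * c1 + c1 ^ 2 * c2 * q + c0 * c2 ^ 2 * q = 0)
    (h2 : c0 ^ 2 * c2 + c0 * c1 ^ 2 + c1 * c2 ^ 2 * q = 0) :
    (c1 = 0 ∧ c2 = 0) ∨ (c0 = 0 ∧ c2 = 0) ∨ (c0 = 0 ∧ c1 = 0) := by
  have hq : q ≠ 0 := by rintro rfl; exact hnc ⟨0, by norm_num⟩
  by_cases h0 : c0 = 0
  · subst h0
    have h1'' : c1 ^ 2 * c2 * q = 0 := by linarith
    have h1' : c1 ^ 2 * c2 = 0 := by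
      rcases mul_eq_zero.mp h1'' with h | h
      · exact h
      · exact absurd h hq
    by_cases hc1 : c1 = 0
    · exact Or.inr (Or.inr ⟨rfl, hc1⟩)
    · have : c2 = 0 := by
        have := mul_eq_zero.mp h1'
        rcases this with h | h
        · exact absurd (pow_eq_zero_iff (by norm_num)|>.mp h) hc1
        · exact h
      exact Or.inr (Or.inl ⟨rfl, this⟩)
  · left
    have key : c0 * (c1 ^ 3 - q * c2 ^ 3) = 0 := by linear_combination c1 * h2 - c2 * h1
    have h3 : c1 ^ 3 = q * c2 ^ 3 := by
      rcases mul_eq_zero.mp key with h | h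
      · exact absurd h h0
      · linarith
    by_cases hc2 : c2 = 0
    · have hc1 : c1 = 0 := by
        have : c1 ^ 3 = 0 := by rw [h3, hc2]; ring
        exact pow_eq_zero_iff (by norm_num) |>.mp this
      exact ⟨hc1, hc2⟩
    · exfalso
      exact hnc ⟨c1 / c2, by field_simp; linarith [h3]⟩

/-! ### Exponent-3 groups are 2-Engel -/

section GroupCube

variable {G : Type*} [Group G] (hcube : ∀ g : G, g ^ 3 = 1)

include hcube

private lemma cube_mul_self (x : G) : x * x * x = 1 := by
  have h := hcube x
  rwa [pow_succ, pow_two] at h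

private lemma inv_eq_sq (x : G) : x⁻¹ = x * x :=
  inv_eq_of_mul_eq_one_right (by rw [← mul_assoc]; exact cube_mul_self hcube x)

private lemma inv_mul_inv (x : G) : x⁻¹ * x⁻¹ = x := by
  rw [inv_eq_sq hcube]
  calc x * x * (x * x) = x * (x * x * x) := by group
    _ = x := by rw [cube_mul_self hcube, mul_one]

/-- the key identity `a*b*a = b⁻¹*a⁻¹*b⁻¹` in exponent-3 groups. -/
private lemma aux_I (a b : G) : a * b * a = b⁻¹ * a⁻¹ * b⁻¹ := by
  have h := hcube (a * b)
  rw [pow_succ, pow_two] at h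
  have h2 : (a * b * a) * (b * a * b) = 1 := by rw [← h]; group
  have := eq_inv_of_mul_eq_one_left h2
  rw [this]
  group

/-- In a group of exponent 3, commutators are central in the subgroup generated by
the two elements: `x` commutes with `⁅x, y⁆`. -/
lemma engel (x y : G) : x * (x * y * x⁻¹ * y⁻¹) = (x * y * x⁻¹ * y⁻¹) * x := by
  have I1 : y * x * y = x⁻¹ * y⁻¹ * x⁻¹ := aux_I hcube y x
  have I2 : y⁻¹ * x * y⁻¹ = x⁻¹ * y * x⁻¹ := by
    have := aux_I hcube y⁻¹ x
    rwa [inv_inv] at this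
  have I3 : x⁻¹ * y * x⁻¹ = y⁻¹ * x * y⁻¹ := I2.symm
  -- first: LHS = y⁻¹ * x * y
  have hL : x * (x * y * x⁻¹ * y⁻¹) = y⁻¹ * x * y := by
    calc x * (x * y * x⁻¹ * y⁻¹)
        = (x * x) * y * x⁻¹ * y⁻¹ := by group
      _ = x⁻¹ * y * x⁻¹ * y⁻¹ := by rw [← inv_eq_sq hcube]
      _ = (y⁻¹ * x * y⁻¹) * y⁻¹ := by rw [I3]
      _ = y⁻¹ * x * (y⁻¹ * y⁻¹) := by group
      _ = y⁻¹ * x * y := by rw [inv_mul_inv hcube]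
  -- second : RHS = y⁻¹ * x * y, shown by y * RHS = x * y
  have hR : y * ((x * y * x⁻¹ * y⁻¹) * x) = x * y := by
    calc y * ((x * y * x⁻¹ * y⁻¹) * x)
        = (y * x * y) * (x⁻¹ * y⁻¹ * x) := by group
      _ = (x⁻¹ * y⁻¹ * x⁻¹) * (x⁻¹ * y⁻¹ * x) := by rw [I1]
      _ = x⁻¹ * y⁻¹ * (x⁻¹ * x⁻¹) * y⁻¹ * x := by group
      _ = x⁻¹ * y⁻¹ * x * y⁻¹ * x := by rw [inv_mul_inv hcube]
      _ = x⁻¹ * (y⁻¹ * x * y⁻¹) * x := by group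
      _ = x⁻¹ * (x⁻¹ * y * x⁻¹) * x := by rw [I2]
      _ = (x⁻¹ * x⁻¹) * y := by group
      _ = x * y := by rw [inv_mul_inv hcube]
  rw [hL]
  have := congrArg (fun t => y⁻¹ * t) hR
  calc y⁻¹ * x * y = y⁻¹ * (x * y) := by group
    _ = y⁻¹ * (y * ((x * y * x⁻¹ * y⁻¹) * x)) := by rw [hR]
    _ = (x * y * x⁻¹ * y⁻¹) * x := by group

end GroupCube

open Module

/-! ### Cubic extensions of ℚ -/

section FieldLemmas

variable {K : Type*} [Field K] [Algebra ℚ K]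

/-- The only roots of unity in a cubic extension of `ℚ` are `±1`. -/
lemma roots_pm (h3 : finrank ℚ K = 3) {w : K} {n : ℕ} (hn : 0 < n) (hw : w ^ n = 1) :
    w = 1 ∨ w = -1 := by
  haveI : FiniteDimensional ℚ K := FiniteDimensional.of_finrank_pos (by omega)
  haveI : CharZero K := charZero_of_injective_algebraMap (algebraMap ℚ K).injective
  have hfin : IsOfFinOrder w := isOfFinOrder_iff_pow_eq_one.mpr ⟨n, hn, hw⟩
  have hmpos : 0 < orderOf w := hfin.orderOf_pos
  have hprim : IsPrimitiveRoot w (orderOf w) := IsPrimitiveRoot.orderOf w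
  have hcyc := Polynomial.cyclotomic_eq_minpoly_rat hprim hmpos
  rw [show (DivisionRing.toRatAlgebra : Algebra ℚ K) = ‹Algebra ℚ K› from
    Subsingleton.elim _ _] at hcyc
  have hint : IsIntegral ℚ w := IsIntegral.of_finite ℚ w
  have hdvd : (minpoly ℚ w).natDegree ∣ finrank ℚ K := minpoly.degree_dvd hint
  have hdeg : (minpoly ℚ w).natDegree = (orderOf w).totient := by
    rw [← hcyc, Polynomial.natDegree_cyclotomic]
  rw [hdeg, h3] at hdvd
  have h13 := (Nat.prime_three).eq_one_or_self_of_dvd _ hdvd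
  have hm2 : orderOf w = 1 ∨ orderOf w = 2 := by
    rcases h13 with h | h
    · exact Nat.totient_eq_one_iff.mp h
    · exfalso
      rcases Nat.lt_or_ge (orderOf w) 3 with hlt | hge
      · have : orderOf w = 1 ∨ orderOf w = 2 := by omega
        rcases this with h' | h' <;> rw [h'] at h <;> exact absurd h (by decide)
      · have he := Nat.totient_even (by omega : 2 < orderOf w)
        rw [h] at he
        exact (by decide : ¬ Even 3) he
  rcases hm2 with h | h
  · exact Or.inl (orderOf_eq_one_iff.mp h)
  · have hw2 : w * w = 1 := by
      have hp := pow_orderOf_eq_one w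
      rwa [h, pow_two] at hp
    rcases mul_self_eq_one_iff.mp hw2 with h1 | h1
    · exact Or.inl h1
    · exact Or.inr h1

/-- In a cubic extension of `ℚ`, an element some power of which is rational has rational cube. -/
lemma cube_field (h3 : finrank ℚ K = 3) {a : K} (ha : a ≠ 0) {n : ℕ} (hn : 0 < n)
    {q : ℚ} (hq : a ^ n = algebraMap ℚ K q) : ∃ r : ℚ, a ^ 3 = algebraMap ℚ K r := by
  haveI : FiniteDimensional ℚ K := FiniteDimensional.of_finrank_pos (by omega)
  have hq0 : q ≠ 0 := by
    rintro rfl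
    rw [map_zero] at hq
    exact ha (pow_eq_zero_iff hn.ne' |>.mp hq)
  have hNn : (Algebra.norm ℚ a) ^ n = q ^ 3 := by
    rw [← map_pow, hq, Algebra.norm_algebraMap, h3]
  have hN0 : Algebra.norm ℚ a ≠ 0 := by
    intro h
    rw [h, zero_pow hn.ne'] at hNn
    exact hq0 (pow_eq_zero_iff (by norm_num) |>.mp hNn.symm)
  have hmapN : algebraMap ℚ K (Algebra.norm ℚ a) ≠ 0 :=
    fun h => hN0 ((algebraMap ℚ K).injective (by rw [h, map_zero]))
  have hwn : (a ^ 3 * (algebraMap ℚ K (Algebra.norm ℚ a))⁻¹) ^ n = 1 := by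
    rw [mul_pow, ← pow_mul, mul_comm 3 n, pow_mul, hq, ← map_pow, inv_pow, ← map_pow, hNn]
    refine mul_inv_cancel₀ ?_
    exact fun h => (pow_ne_zero 3 hq0) ((algebraMap ℚ K).injective (by rw [h, map_zero]))
  rcases roots_pm h3 hn hwn with h | h
  · exact ⟨Algebra.norm ℚ a, (mul_inv_eq_one₀ hmapN).mp h⟩
  · refine ⟨-(Algebra.norm ℚ a), ?_⟩
    have h2 := congrArg (fun z => z * algebraMap ℚ K (Algebra.norm ℚ a)) h
    simp only [inv_mul_cancel_right₀ hmapN, neg_mul, one_mul] at h2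
    rw [h2, map_neg]

/-- If `a` is irrational with rational cube `q` in a cubic extension of `ℚ`,
then `q` is not a rational cube. -/
lemma not_cube_field (h3 : finrank ℚ K = 3) {a : K} (ha : a ∉ Set.range (algebraMap ℚ K))
    {q : ℚ} (hq : a ^ 3 = algebraMap ℚ K q) : ¬ ∃ t : ℚ, t ^ 3 = q := by
  rintro ⟨t, rfl⟩
  have ht0 : t ≠ 0 := by
    rintro rfl
    rw [show ((0:ℚ)^3) = 0 by norm_num, map_zero] at hq
    have : a = 0 := pow_eq_zero_iff (by norm_num) |>.mp hq
    exact ha ⟨0, by rw [map_zero, this]⟩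
  have htK : algebraMap ℚ K t ≠ 0 :=
    fun h => ht0 ((algebraMap ℚ K).injective (by rw [h, map_zero]))
  have hw : (a / algebraMap ℚ K t) ^ 3 = 1 := by
    rw [div_pow, hq, map_pow]
    exact div_self (pow_ne_zero _ htK)
  rcases roots_pm h3 (by norm_num) hw with h | h
  · exact ha ⟨t, ((div_eq_one_iff_eq htK).mp h).symm⟩
  · refine ha ⟨-t, ?_⟩
    rw [map_neg, (div_eq_iff htK).mp h]
    ring

end FieldLemmas

/-! ### Computations in commutative ℚ-algebras -/

section CommRingLemmas

variable {R : Type*} [CommRing R] [IsDomain R] [Algebra ℚ R]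

lemma indep_generic {t : R} (ht : t ∉ Set.range (algebraMap ℚ R)) {q : ℚ}
    (hq3 : t ^ 3 = algebraMap ℚ R q) (hnc : ¬ ∃ s : ℚ, s ^ 3 = q) {c0 c1 c2 : ℚ}
    (h : algebraMap ℚ R c0 + algebraMap ℚ R c1 * t + algebraMap ℚ R c2 * t ^ 2 = 0) :
    c0 = 0 ∧ c1 = 0 ∧ c2 = 0 := by
  have hinj : Function.Injective (algebraMap ℚ R) := (algebraMap ℚ R).injective
  by_cases hc2 : c2 = 0
  · subst hc2
    rw [map_zero, zero_mul, add_zero] at h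
    by_cases hc1 : c1 = 0
    · subst hc1
      rw [map_zero, zero_mul, add_zero] at h
      refine ⟨hinj (by simpa using h), rfl, rfl⟩
    · exfalso
      apply ht
      refine ⟨-c0 / c1, ?_⟩
      have h' : algebraMap ℚ R c1 * t = algebraMap ℚ R (-c0) := by
        rw [map_neg]; linear_combination h
      have h2 := congrArg (fun z => algebraMap ℚ R c1⁻¹ * z) h'
      rw [← mul_assoc, ← map_mul, inv_mul_cancel₀ hc1, map_one, one_mul, ← map_mul] at h2
      rw [h2]
      congr 1
      rw [div_eq_mul_inv]
      ring
  · exfalso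
    set d0 : ℚ := -c0 / c2 with hd0
    set d1 : ℚ := -c1 / c2 with hd1
    have hsq : t ^ 2 = algebraMap ℚ R d0 + algebraMap ℚ R d1 * t := by
      have h2 := congrArg (fun z => algebraMap ℚ R c2⁻¹ * z) h
      simp only [mul_add, mul_zero, ← mul_assoc, ← map_mul] at h2
      rw [inv_mul_cancel₀ hc2, map_one, one_mul] at h2
      have e0 : c2⁻¹ * c0 = -d0 := by rw [hd0]; field_simp
      have e1 : c2⁻¹ * c1 = -d1 := by rw [hd1]; field_simp
      rw [e0, e1, map_neg, map_neg] at h2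
      linear_combination h2
    have hcube : algebraMap ℚ R (d1 * d0) + algebraMap ℚ R (d0 + d1 ^ 2) * t
        = algebraMap ℚ R q := by
      rw [← hq3]
      calc algebraMap ℚ R (d1 * d0) + algebraMap ℚ R (d0 + d1 ^ 2) * t
          = algebraMap ℚ R d1 * (algebraMap ℚ R d0 + algebraMap ℚ R d1 * t)
            + algebraMap ℚ R d0 * t := by
            rw [map_mul, map_add, map_pow]; ring
        _ = algebraMap ℚ R d1 * t ^ 2 + algebraMap ℚ R d0 * t := by rw [← hsq]
        _ = (algebraMap ℚ R d0 + algebraMap ℚ R d1 * t) * t := by ring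
        _ = t ^ 2 * t := by rw [← hsq]
        _ = t ^ 3 := by ring
    by_cases hd : d0 + d1 ^ 2 = 0
    · rw [hd, map_zero, zero_mul, add_zero] at hcube
      have hqd : q = d1 * d0 := (hinj hcube).symm
      apply hnc
      refine ⟨-d1, ?_⟩
      have hd' : d0 = -d1 ^ 2 := by linarith [hd]
      rw [hqd, hd']; ring
    · apply ht
      refine ⟨(q - d1 * d0) / (d0 + d1 ^ 2), ?_⟩
      have h' : algebraMap ℚ R (d0 + d1 ^ 2) * t = algebraMap ℚ R (q - d1 * d0) := by
        rw [map_sub]; linear_combination hcube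
      have h2 := congrArg (fun z => algebraMap ℚ R (d0 + d1 ^ 2)⁻¹ * z) h'
      rw [← mul_assoc, ← map_mul, inv_mul_cancel₀ hd, map_one, one_mul, ← map_mul] at h2
      rw [h2]
      congr 1
      rw [div_eq_mul_inv]
      ring

omit [IsDomain R] in
/-- expansion of a cube in terms of the coordinates, in a commutative ring where `t^3 = S q`. -/
lemma cube_coords {t : R} {q : ℚ} (hq3 : t ^ 3 = algebraMap ℚ R q) (c0 c1 c2 r : ℚ)
    (hr : (algebraMap ℚ R c0 + algebraMap ℚ R c1 * t + algebraMap ℚ R c2 * t ^ 2) ^ 3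
      = algebraMap ℚ R r) :
    algebraMap ℚ R (c0 ^ 3 + q * c1 ^ 3 + q ^ 2 * c2 ^ 3 + 6 * q * c0 * c1 * c2 - r)
      + algebraMap ℚ R (3 * (c0 ^ 2 * c1 + c1 ^ 2 * c2 * q + c0 * c2 ^ 2 * q)) * t
      + algebraMap ℚ R (3 * (c0 ^ 2 * c2 + c0 * c1 ^ 2 + c1 * c2 ^ 2 * q)) * t ^ 2 = 0 := by
  simp only [map_add, map_sub, map_mul, map_pow, map_ofNat]
  linear_combination hr - ((algebraMap ℚ R c1) ^ 3 + 6 * (algebraMap ℚ R c0) * (algebraMap ℚ R c1) * (algebraMap ℚ R c2) + (3 * (algebraMap ℚ R c1) ^ 2 * (algebraMap ℚ R c2) + 3 * (algebraMap ℚ R c0) * (algebraMap ℚ R c2) ^ 2) * t + 3 * (algebraMap ℚ R c1) * (algebraMap ℚ R c2) ^ 2 * t ^ 2 + (algebraMap ℚ R c2) ^ 3 * (t ^ 3 + algebraMap ℚ R q)) * hq3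

omit [IsDomain R] in
/-- multiplication in coordinates. -/
lemma mul_coords {t : R} {q : ℚ} (hq3 : t ^ 3 = algebraMap ℚ R q) (c0 c1 c2 d0 d1 d2 : ℚ) :
    (algebraMap ℚ R c0 + algebraMap ℚ R c1 * t + algebraMap ℚ R c2 * t ^ 2)
      * (algebraMap ℚ R d0 + algebraMap ℚ R d1 * t + algebraMap ℚ R d2 * t ^ 2)
    = algebraMap ℚ R (c0 * d0 + q * (c1 * d2 + c2 * d1))
      + algebraMap ℚ R (c0 * d1 + c1 * d0 + q * c2 * d2) * t
      + algebraMap ℚ R (c0 * d2 + c1 * d1 + c2 * d0) * t ^ 2 := by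
  simp only [map_add, map_mul]
  linear_combination (algebraMap ℚ R c1 * algebraMap ℚ R d2 + algebraMap ℚ R c2 * algebraMap ℚ R d1 + algebraMap ℚ R c2 * algebraMap ℚ R d2 * t) * hq3

end CommRingLemmas

open Module

section DivisionAlgebra

variable {A : Type} [DivisionRing A] [Algebra ℚ A]

/-- dimension of a commutative subalgebra of a 9-dimensional central division algebra over ℚ. -/
lemma finrank_adjoin_comm (hcenter : Subalgebra.center ℚ A = ⊥) (hrank : finrank ℚ A = 9)
    {s : Set A} (hcomm : ∀ a ∈ s, ∀ b ∈ s, a * b = b * a) :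
    finrank ℚ ↥(Algebra.adjoin ℚ s) = 1 ∨ finrank ℚ ↥(Algebra.adjoin ℚ s) = 3 := by
  haveI hFD : FiniteDimensional ℚ A := FiniteDimensional.of_finrank_pos (by omega)
  set B := Algebra.adjoin ℚ s with hB
  letI : CommRing B := Algebra.adjoinCommRingOfComm ℚ hcomm
  haveI : IsDomain B := Function.Injective.isDomain B.val.toRingHom Subtype.val_injective
  haveI : FiniteDimensional ℚ B := inferInstance
  haveI : Algebra.IsIntegral ℚ B := inferInstance
  have hfield : IsField B := isField_of_isIntegral_of_isField' (Field.toIsField ℚ)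
  letI fB : Field B := hfield.toField
  letI : Module B A := Module.compHom A B.val.toRingHom
  haveI : IsScalarTower ℚ B A := by
    constructor
    intro q b x
    show ((q • b : B) : A) * x = q • (((b : A)) * x)
    rw [Subalgebra.coe_smul, Algebra.smul_def, Algebra.smul_def, mul_assoc]
  have hmul : finrank ℚ B * finrank B A = finrank ℚ A := Module.finrank_mul_finrank ℚ B A
  have hdvd : finrank ℚ ↥B ∣ 9 := ⟨finrank B A, by rw [← hrank, ← hmul]⟩
  have htri : finrank ℚ ↥B = 1 ∨ finrank ℚ ↥B = 3 ∨ finrank ℚ ↥B = 9 := by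
    have hle := Nat.le_of_dvd (by norm_num) hdvd
    interval_cases h : finrank ℚ ↥B <;> revert hdvd <;> decide
  rcases htri with h | h | h
  · exact Or.inl h
  · exact Or.inr h
  · exfalso
    have hBtop : B = ⊤ := by
      rw [← Algebra.toSubmodule_eq_top]
      exact Submodule.eq_top_of_finrank_eq (by rw [hrank]; exact h)
    have hcommA : ∀ x y : A, x * y = y * x := by
      intro x y
      have hx : x ∈ B := by rw [hBtop]; trivial
      have hy : y ∈ B := by rw [hBtop]; trivial
      have := mul_comm (⟨x, hx⟩ : B) (⟨y, hy⟩ : B)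
      exact congrArg Subtype.val this
    have hct : Subalgebra.center ℚ A = ⊤ := by
      rw [Algebra.eq_top_iff]
      intro x
      rw [Subalgebra.mem_center_iff]
      intro y
      exact hcommA y x
    have : (⊥ : Subalgebra ℚ A) = ⊤ := by rw [← hcenter, hct]
    have h1 := Subalgebra.bot_eq_top_iff_finrank_eq_one.mp this
    omega

end DivisionAlgebra

section Bridges

variable {A : Type} [DivisionRing A] [Algebra ℚ A]

private lemma comm_singleton (a : A) :
    ∀ x ∈ ({a} : Set A), ∀ y ∈ ({a} : Set A), x * y = y * x := by
  rintro x hx y hy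
  rw [Set.mem_singleton_iff] at hx hy
  rw [hx, hy]

set_option synthInstance.maxHeartbeats 1000000
set_option maxHeartbeats 1000000

/-- Key bridge: if some power of a nonzero element is rational, so is its cube. -/
lemma cube_bridge (hcenter : Subalgebra.center ℚ A = ⊥) (hrank : finrank ℚ A = 9)
    {a : A} (ha : a ≠ 0) {n : ℕ} (hn : 0 < n) {q : ℚ}
    (hq : a ^ n = algebraMap ℚ A q) : ∃ r : ℚ, a ^ 3 = algebraMap ℚ A r := by
  haveI hFD : FiniteDimensional ℚ A := FiniteDimensional.of_finrank_pos (by omega)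
  rcases finrank_adjoin_comm hcenter hrank (comm_singleton a) with h1 | h3
  · have hbot : Algebra.adjoin ℚ ({a} : Set A) = ⊥ := Subalgebra.eq_bot_of_finrank_one h1
    have hmem : a ∈ (⊥ : Subalgebra ℚ A) := hbot ▸ Algebra.self_mem_adjoin_singleton ℚ a
    rw [Algebra.mem_bot] at hmem
    obtain ⟨r, hr⟩ := hmem
    exact ⟨r ^ 3, by rw [← hr, map_pow]⟩
  · set B := Algebra.adjoin ℚ ({a} : Set A) with hBdef
    letI : CommRing B := Algebra.adjoinCommRingOfComm ℚ (comm_singleton a)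
    haveI : IsDomain B := Function.Injective.isDomain B.val.toRingHom Subtype.val_injective
    haveI : FiniteDimensional ℚ B := inferInstance
    haveI : Algebra.IsIntegral ℚ B := inferInstance
    letI fB : Field B := (isField_of_isIntegral_of_isField' (Field.toIsField ℚ)).toField
    set a' : B := ⟨a, Algebra.self_mem_adjoin_singleton ℚ a⟩ with ha'def
    have ha' : a' ≠ 0 := fun h => ha (congrArg Subtype.val h)
    have hq' : a' ^ n = algebraMap ℚ B q := by
      apply Subtype.ext
      show a ^ n = _
      rw [hq]
      rfl
    obtain ⟨r, hr⟩ := cube_field (K := B) h3 ha' hn hq'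
    refine ⟨r, ?_⟩
    have := congrArg Subtype.val hr
    exact this
 
/-- If `a` is irrational then its adjoin has dimension 3. -/
lemma finrank_three (hcenter : Subalgebra.center ℚ A = ⊥) (hrank : finrank ℚ A = 9)
    {a : A} (ha : a ∉ Set.range (algebraMap ℚ A)) :
    finrank ℚ ↥(Algebra.adjoin ℚ ({a} : Set A)) = 3 := by
  rcases finrank_adjoin_comm hcenter hrank (comm_singleton a) with h1 | h3
  · exfalso
    have hbot : Algebra.adjoin ℚ ({a} : Set A) = ⊥ := Subalgebra.eq_bot_of_finrank_one h1
    have hmem : a ∈ (⊥ : Subalgebra ℚ A) := hbot ▸ Algebra.self_mem_adjoin_singleton ℚ a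
    rw [Algebra.mem_bot] at hmem
    exact ha hmem
  · exact h3

/-- Anything commuting with an irrational element lies in the subfield it generates. -/
lemma mem_adjoin_of_commute (hcenter : Subalgebra.center ℚ A = ⊥) (hrank : finrank ℚ A = 9)
    {a b : A} (ha : a ∉ Set.range (algebraMap ℚ A)) (hab : a * b = b * a) :
    b ∈ Algebra.adjoin ℚ ({a} : Set A) := by
  haveI hFD : FiniteDimensional ℚ A := FiniteDimensional.of_finrank_pos (by omega)
  have hcomm2 : ∀ x ∈ ({a, b} : Set A), ∀ y ∈ ({a, b} : Set A), x * y = y * x := by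
    rintro x hx y hy
    rcases hx with rfl | hx <;> rcases hy with rfl | hy
    · rfl
    · rw [Set.mem_singleton_iff] at hy; rw [hy]; exact hab
    · rw [Set.mem_singleton_iff] at hx; rw [hx]; exact hab.symm
    · rw [Set.mem_singleton_iff] at hx hy; rw [hx, hy]
  have hK3 := finrank_three hcenter hrank ha
  have hle : Algebra.adjoin ℚ ({a} : Set A) ≤ Algebra.adjoin ℚ ({a, b} : Set A) :=
    Algebra.adjoin_mono (by simp)
  have hmono : finrank ℚ ↥(Algebra.adjoin ℚ ({a} : Set A))
      ≤ finrank ℚ ↥(Algebra.adjoin ℚ ({a, b} : Set A)) :=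
    Submodule.finrank_mono (Subalgebra.toSubmodule.monotone hle)
  have hL3 : finrank ℚ ↥(Algebra.adjoin ℚ ({a, b} : Set A)) = 3 := by
    rcases finrank_adjoin_comm hcenter hrank hcomm2 with h | h
    · omega
    · exact h
  have heq : Subalgebra.toSubmodule (Algebra.adjoin ℚ ({a} : Set A))
      = Subalgebra.toSubmodule (Algebra.adjoin ℚ ({a, b} : Set A)) :=
    Submodule.eq_of_le_of_finrank_eq (Subalgebra.toSubmodule.monotone hle) (by exact hK3.trans hL3.symm)
  have heq' : Algebra.adjoin ℚ ({a} : Set A) = Algebra.adjoin ℚ ({a, b} : Set A) :=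
    Subalgebra.toSubmodule.injective heq
  rw [heq']
  exact Algebra.subset_adjoin (by simp)

end Bridges

set_option synthInstance.maxHeartbeats 1000000
set_option maxHeartbeats 1000000

section FinalCoords

variable {A : Type} [DivisionRing A] [Algebra ℚ A]

/-- Trichotomy: an element of the subfield generated by an irrational `a` with `a^3 ∈ ℚ`,
itself having rational cube, is a rational multiple of `1`, `a` or `a^2`. -/
lemma final_coords (hcenter : Subalgebra.center ℚ A = ⊥) (hrank : finrank ℚ A = 9)
    {a b : A} (ha : a ∉ Set.range (algebraMap ℚ A)) {q r : ℚ}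
    (hq3 : a ^ 3 = algebraMap ℚ A q) (hr3 : b ^ 3 = algebraMap ℚ A r)
    (hmem : b ∈ Algebra.adjoin ℚ ({a} : Set A)) :
    (∃ c : ℚ, b = algebraMap ℚ A c) ∨ (∃ c : ℚ, b = algebraMap ℚ A c * a)
      ∨ (∃ c : ℚ, b = algebraMap ℚ A c * a ^ 2) := by
  haveI hFD : FiniteDimensional ℚ A := FiniteDimensional.of_finrank_pos (by omega)
  have h3 := finrank_three hcenter hrank ha
  set B := Algebra.adjoin ℚ ({a} : Set A) with hBdef
  letI : CommRing B := Algebra.adjoinCommRingOfComm ℚ (comm_singleton a)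
  haveI : IsDomain B := Function.Injective.isDomain B.val.toRingHom Subtype.val_injective
  haveI : Algebra.IsIntegral ℚ B := inferInstance
  letI fB : Field B := (isField_of_isIntegral_of_isField' (Field.toIsField ℚ)).toField
  set t : B := ⟨a, Algebra.self_mem_adjoin_singleton ℚ a⟩ with htdef
  have hq' : t ^ 3 = algebraMap ℚ B q := by
    apply Subtype.ext
    show a ^ 3 = _
    rw [hq3]
    rfl
  have ht : t ∉ Set.range (algebraMap ℚ B) := by
    rintro ⟨c, hc⟩
    exact ha ⟨c, congrArg Subtype.val hc⟩
  have hnc : ¬ ∃ s : ℚ, s ^ 3 = q := not_cube_field (K := B) h3 ht hq'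
  -- coordinates w.r.t. 1, t, t^2
  have hcoords : ∀ (x : A) (hx : x ∈ B), ∃ c0 c1 c2 : ℚ,
      (⟨x, hx⟩ : B) = algebraMap ℚ B c0 + algebraMap ℚ B c1 * t
        + algebraMap ℚ B c2 * t ^ 2 := by
    intro x hx
    induction hx using Algebra.adjoin_induction with
    | mem z hz =>
      rw [Set.mem_singleton_iff] at hz
      subst hz
      refine ⟨0, 1, 0, ?_⟩
      apply Subtype.ext
      show z = ((algebraMap ℚ B 0 + algebraMap ℚ B 1 * t + algebraMap ℚ B 0 * t ^ 2 : B) : A)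
      show z = algebraMap ℚ A 0 + algebraMap ℚ A 1 * z + algebraMap ℚ A 0 * z ^ 2
      rw [map_zero, map_one, zero_mul, zero_add, add_zero, one_mul]
    | algebraMap c =>
      refine ⟨c, 0, 0, ?_⟩
      apply Subtype.ext
      show algebraMap ℚ A c = algebraMap ℚ A c + algebraMap ℚ A 0 * a + algebraMap ℚ A 0 * a ^ 2
      rw [map_zero, zero_mul, zero_mul, add_zero, add_zero]
    | add z w hz hw ihz ihw =>
      obtain ⟨c0, c1, c2, hc⟩ := ihz
      obtain ⟨d0, d1, d2, hd⟩ := ihw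
      refine ⟨c0 + d0, c1 + d1, c2 + d2, ?_⟩
      have hzw : (⟨z + w, add_mem hz hw⟩ : B) = ⟨z, hz⟩ + ⟨w, hw⟩ := rfl
      rw [hzw, hc, hd, (algebraMap ℚ B).map_add c0 d0, (algebraMap ℚ B).map_add c1 d1,
        (algebraMap ℚ B).map_add c2 d2]
      ring
    | mul z w hz hw ihz ihw =>
      obtain ⟨c0, c1, c2, hc⟩ := ihz
      obtain ⟨d0, d1, d2, hd⟩ := ihw
      refine ⟨c0 * d0 + q * (c1 * d2 + c2 * d1), c0 * d1 + c1 * d0 + q * c2 * d2,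
        c0 * d2 + c1 * d1 + c2 * d0, ?_⟩
      have hzw : (⟨z * w, mul_mem hz hw⟩ : B) = ⟨z, hz⟩ * ⟨w, hw⟩ := rfl
      rw [hzw, hc, hd, mul_coords hq']
  obtain ⟨c0, c1, c2, hb'⟩ := hcoords b hmem
  have hr' : (⟨b, hmem⟩ : B) ^ 3 = algebraMap ℚ B r := by
    apply Subtype.ext
    show b ^ 3 = _
    rw [hr3]
    rfl
  have hrel := cube_coords hq' c0 c1 c2 r (by rw [← hb']; exact hr')
  obtain ⟨-, hE1, hE2⟩ := indep_generic ht hq' hnc hrel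
  have h1 : c0 ^ 2 * c1 + c1 ^ 2 * c2 * q + c0 * c2 ^ 2 * q = 0 := by linarith
  have h2 : c0 ^ 2 * c2 + c0 * c1 ^ 2 + c1 * c2 ^ 2 * q = 0 := by linarith
  rcases rat_coeffs hnc h1 h2 with ⟨hh1, hh2⟩ | ⟨hh1, hh2⟩ | ⟨hh1, hh2⟩
  · left
    refine ⟨c0, ?_⟩
    rw [hh1, hh2] at hb'
    rw [(algebraMap ℚ B).map_zero] at hb'
    simp only [zero_mul, add_zero, zero_add] at hb'
    exact congrArg Subtype.val hb'
  · right; left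
    refine ⟨c1, ?_⟩
    rw [hh1, hh2] at hb'
    rw [(algebraMap ℚ B).map_zero] at hb'
    simp only [zero_mul, add_zero, zero_add] at hb'
    exact congrArg Subtype.val hb'
  · right; right
    refine ⟨c2, ?_⟩
    rw [hh1, hh2] at hb'
    rw [(algebraMap ℚ B).map_zero] at hb'
    simp only [zero_mul, add_zero, zero_add] at hb'
    exact congrArg Subtype.val hb'

end FinalCoords

/-! ### Main theorem -/

/-- The central subgroup `Kˣ ⊆ Aˣ`: the units of `A` lying in the image of the structure map
`K → A`. -/
def centralUnits (K A : Type*) [Field K] [DivisionRing A] [Algebra K A] : Subgroup Aˣ :=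
  (Units.map (algebraMap K A).toMonoidHom).range

instance centralUnits_normal (K A : Type*) [Field K] [DivisionRing A] [Algebra K A] :
    (centralUnits K A).Normal := by
  constructor
  intro x hx g
  obtain ⟨k, hk⟩ := hx
  have hx' : (x : A) = algebraMap K A (k : K) := by rw [← hk]; rfl
  have h1 : g * x = x * g := by
    apply Units.ext
    rw [Units.val_mul, Units.val_mul, hx']
    exact (Algebra.commutes (k : K) (g : A)).symm
  have h2 : g * x * g⁻¹ = x := by rw [h1, mul_inv_cancel_right]
  rw [h2]
  exact ⟨k, hk⟩

set_option maxHeartbeats 2000000 in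
set_option synthInstance.maxHeartbeats 1000000 in
/-- Let `A` be a central division algebra of dimension `9` over `ℚ` and let `G` be a finite
group admitting an injective group homomorphism into the group `Aˣ/ℚˣ` (the automorphism
group of the non-trivial Severi–Brauer surface over `ℚ` corresponding to `A`). Then `G` is
isomorphic to a subgroup of `μ₃ × μ₃`. -/
theorem stmt_19 (A : Type) [DivisionRing A] [Algebra ℚ A]
    (hcenter : Subalgebra.center ℚ A = ⊥) (hrank : Module.finrank ℚ A = 9)
    (G : Type) [Group G] [Finite G]
    (f : G →* Aˣ ⧸ centralUnits ℚ A) (hf : Function.Injective f) :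
    ∃ h : G →* Multiplicative (ZMod 3 × ZMod 3), Function.Injective h := by
  classical
  haveI : FiniteDimensional ℚ A := FiniteDimensional.of_finrank_pos (by omega)
  let mk : Aˣ →* Aˣ ⧸ centralUnits ℚ A := QuotientGroup.mk' (centralUnits ℚ A)
  have memc : ∀ u : Aˣ, u ∈ centralUnits ℚ A ↔ ∃ c : ℚ, (u : A) = algebraMap ℚ A c := by
    intro u
    constructor
    · rintro ⟨k, hk⟩
      exact ⟨(k : ℚ), by rw [← hk]; rfl⟩
    · rintro ⟨c, hc⟩
      have hc0 : c ≠ 0 := by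
        rintro rfl
        rw [map_zero] at hc
        exact u.ne_zero hc
      exact ⟨Units.mk0 c hc0, Units.ext (by rw [hc]; rfl)⟩
  have cube_u : ∀ u : Aˣ, IsOfFinOrder (mk u) →
      ∃ c : ℚ, c ≠ 0 ∧ (u : A) ^ 3 = algebraMap ℚ A c := by
    intro u hu
    obtain ⟨n, hn, hun⟩ := isOfFinOrder_iff_pow_eq_one.mp hu
    have h1 : mk (u ^ n) = 1 := by rw [map_pow]; exact hun
    have hmem : u ^ n ∈ centralUnits ℚ A := (QuotientGroup.eq_one_iff _).mp h1
    obtain ⟨s, hs⟩ := (memc _).mp hmem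
    have hs' : (u : A) ^ n = algebraMap ℚ A s := by
      rw [← Units.val_pow_eq_pow_val]; exact hs
    obtain ⟨r, hr⟩ := cube_bridge hcenter hrank u.ne_zero hn hs'
    refine ⟨r, ?_, hr⟩
    rintro rfl
    rw [map_zero] at hr
    exact pow_ne_zero 3 u.ne_zero hr
  have lift : ∀ g : G, ∃ u : Aˣ, mk u = f g := fun g => QuotientGroup.mk'_surjective _ (f g)
  have ford : ∀ g : G, IsOfFinOrder (f g) := fun g => f.isOfFinOrder (isOfFinOrder_of_finite g)
  have mk_cube : ∀ (g : G) (u : Aˣ), mk u = f g → mk (u ^ 3) = 1 := by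
    intro g u hu
    obtain ⟨c, hc0, hc⟩ := cube_u u (by rw [hu]; exact ford g)
    refine (QuotientGroup.eq_one_iff _).mpr ((memc _).mpr ⟨c, ?_⟩)
    rw [Units.val_pow_eq_pow_val]; exact hc
  have hcube : ∀ g : G, g ^ 3 = 1 := by
    intro g
    obtain ⟨u, hu⟩ := lift g
    apply hf
    rw [map_pow, map_one, ← hu, ← map_pow]
    exact mk_cube g u hu
  have lift_comm : ∀ u v : Aˣ, mk u * mk v = mk v * mk u → IsOfFinOrder (mk v) →
      u * v = v * u := by
    intro u v hcm hford
    obtain ⟨r, hr0, hr⟩ := cube_u v hford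
    have h1 : mk ((v * u)⁻¹ * (u * v)) = 1 := by
      rw [map_mul, map_inv, map_mul, map_mul, hcm]
      exact inv_mul_cancel _
    obtain ⟨k, hk⟩ := (QuotientGroup.eq_one_iff _).mp h1
    set cu : Aˣ := (Units.map (algebraMap ℚ A).toMonoidHom) k with hcu
    have hcu_comm : ∀ w : Aˣ, cu * w = w * cu := by
      intro w
      apply Units.ext
      show algebraMap ℚ A (k : ℚ) * (w : A) = (w : A) * algebraMap ℚ A (k : ℚ)
      exact Algebra.commutes _ _
    have h2 : u * v = v * u * cu := by rw [hk]; group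
    have h3 : u * v * u⁻¹ = v * cu := by
      calc u * v * u⁻¹ = v * u * cu * u⁻¹ := by rw [h2]
        _ = v * u * (cu * u⁻¹) := by rw [mul_assoc]
        _ = v * u * (u⁻¹ * cu) := by rw [hcu_comm u⁻¹]
        _ = v * cu := by group
    have h4 : u * v ^ 3 * u⁻¹ = v ^ 3 * cu ^ 3 := by
      have h5 : (u * v * u⁻¹) ^ 3 = u * v ^ 3 * u⁻¹ := conj_pow
      rw [h3] at h5
      rw [← h5]
      exact Commute.mul_pow ((hcu_comm v).symm) 3
    have hv3c : ∀ w : Aˣ, v ^ 3 * w = w * v ^ 3 := by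
      intro w
      apply Units.ext
      show ((v ^ 3 : Aˣ) : A) * (w : A) = (w : A) * ((v ^ 3 : Aˣ) : A)
      rw [Units.val_pow_eq_pow_val, hr]
      exact Algebra.commutes _ _
    have h6 : v ^ 3 * cu ^ 3 = v ^ 3 := by
      rw [← h4, ← hv3c u]
      group
    have h7 : cu ^ 3 = 1 := by
      have h6' : v ^ 3 * cu ^ 3 = v ^ 3 * 1 := by rw [mul_one]; exact h6
      exact mul_left_cancel h6'
    have h8 : (k : ℚ) ^ 3 = 1 := by
      have hval := congrArg Units.val h7
      rw [Units.val_pow_eq_pow_val] at hval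
      have hval' : (algebraMap ℚ A (k : ℚ)) ^ 3 = 1 := hval
      rw [← map_pow] at hval'
      exact (algebraMap ℚ A).injective (by rw [hval', map_one])
    have h10 : (k : ℚ) = 1 := q_cube_one h8
    have h11 : cu = 1 := by
      apply Units.ext
      show algebraMap ℚ A (k : ℚ) = 1
      rw [h10, map_one]
    rw [h2, h11, mul_one]
  have habel : ∀ x y : G, x * y = y * x := by
    intro x y
    obtain ⟨u, hu⟩ := lift x
    obtain ⟨v, hv⟩ := lift y
    set c : Aˣ := u * v * u⁻¹ * v⁻¹ with hcdef
    have hc_mk : mk c = f (x * y * x⁻¹ * y⁻¹) := by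
      simp only [hcdef, map_mul, map_inv, hu, hv]
    have e1 : x * (x * y * x⁻¹ * y⁻¹) = (x * y * x⁻¹ * y⁻¹) * x := engel hcube x y
    have e2 : y * (x * y * x⁻¹ * y⁻¹) = (x * y * x⁻¹ * y⁻¹) * y := by
      have hcw : Commute y (y * x * y⁻¹ * x⁻¹) := engel hcube y x
      have h := hcw.inv_right
      rw [show (y * x * y⁻¹ * x⁻¹)⁻¹ = x * y * x⁻¹ * y⁻¹ by group] at h
      exact h
    have hmk1 : mk u * mk c = mk c * mk u := by
      rw [hu, hc_mk, ← map_mul, ← map_mul, e1]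
    have hmk2 : mk v * mk c = mk c * mk v := by
      rw [hv, hc_mk, ← map_mul, ← map_mul, e2]
    have hfordc : IsOfFinOrder (mk c) := by rw [hc_mk]; exact ford _
    have hyc : u * c = c * u := lift_comm u c hmk1 hfordc
    have hvc : v * c = c * v := lift_comm v c hmk2 hfordc
    by_cases hcc : c ∈ centralUnits ℚ A
    · have hone : f (x * y * x⁻¹ * y⁻¹) = 1 := by
        rw [← hc_mk]; exact (QuotientGroup.eq_one_iff _).mpr hcc
      have hz : x * y * x⁻¹ * y⁻¹ = 1 := hf (by rw [hone, map_one])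
      calc x * y = (x * y * x⁻¹ * y⁻¹) * (y * x) := by group
        _ = 1 * (y * x) := by rw [hz]
        _ = y * x := one_mul _
    · have hcval : (c : A) ∉ Set.range (algebraMap ℚ A) := by
        rintro ⟨s, hs⟩
        exact hcc ((memc _).mpr ⟨s, hs.symm⟩)
      have humem : (u : A) ∈ Algebra.adjoin ℚ ({(c : A)} : Set A) :=
        mem_adjoin_of_commute hcenter hrank hcval (congrArg Units.val hyc).symm
      have hvmem : (v : A) ∈ Algebra.adjoin ℚ ({(c : A)} : Set A) :=
        mem_adjoin_of_commute hcenter hrank hcval (congrArg Units.val hvc).symm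
      letI : CommRing (Algebra.adjoin ℚ ({(c : A)} : Set A)) :=
        Algebra.adjoinCommRingOfComm ℚ (comm_singleton _)
      have hcomm' : (u : A) * (v : A) = (v : A) * (u : A) := by
        have := mul_comm (⟨(u : A), humem⟩ : Algebra.adjoin ℚ ({(c : A)} : Set A))
          ⟨(v : A), hvmem⟩
        exact congrArg Subtype.val this
      have huv : u * v = v * u := Units.ext hcomm'
      apply hf
      rw [map_mul, map_mul, ← hu, ← hv, ← map_mul, ← map_mul, huv]
  by_cases htriv : ∀ g : G, g = 1
  · refine ⟨1, ?_⟩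
    intro g1 g2 _
    rw [htriv g1, htriv g2]
  · push_neg at htriv
    obtain ⟨x, hx1⟩ := htriv
    obtain ⟨u, hu⟩ := lift x
    have hucent : (u : A) ∉ Set.range (algebraMap ℚ A) := by
      rintro ⟨s, hs⟩
      apply hx1
      apply hf
      rw [map_one, ← hu]
      exact (QuotientGroup.eq_one_iff _).mpr ((memc _).mpr ⟨s, hs.symm⟩)
    obtain ⟨qx, hqx0, hqx⟩ := cube_u u (by rw [hu]; exact ford x)
    have hgen : ∀ y : G, y = 1 ∨ y = x ∨ y = x * x := by
      intro y
      obtain ⟨v, hv⟩ := lift y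
      obtain ⟨r, hr0, hr⟩ := cube_u v (by rw [hv]; exact ford y)
      have hmkc : mk u * mk v = mk v * mk u := by
        rw [hu, hv, ← map_mul, ← map_mul, habel x y]
      have hvu : u * v = v * u := lift_comm u v hmkc (by rw [hv]; exact ford y)
      have hmemv : (v : A) ∈ Algebra.adjoin ℚ ({(u : A)} : Set A) :=
        mem_adjoin_of_commute hcenter hrank hucent (congrArg Units.val hvu)
      rcases final_coords hcenter hrank hucent hqx hr hmemv with ⟨s, hs⟩ | ⟨s, hs⟩ | ⟨s, hs⟩
      · left
        apply hf
        rw [map_one, ← hv]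
        exact (QuotientGroup.eq_one_iff _).mpr ((memc _).mpr ⟨s, hs⟩)
      · right; left
        have hs0 : s ≠ 0 := by
          rintro rfl
          rw [map_zero, zero_mul] at hs
          exact v.ne_zero hs
        set su : Aˣ := (Units.map (algebraMap ℚ A).toMonoidHom) (Units.mk0 s hs0) with hsudef
        have hveq : v = su * u := Units.ext (by
          show (v : A) = algebraMap ℚ A s * (u : A)
          exact hs)
        have hsu1 : mk su = 1 := (QuotientGroup.eq_one_iff _).mpr ⟨Units.mk0 s hs0, rfl⟩
        apply hf
        rw [← hv, ← hu, hveq, map_mul, hsu1, one_mul]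
      · right; right
        have hs0 : s ≠ 0 := by
          rintro rfl
          rw [map_zero, zero_mul] at hs
          exact v.ne_zero hs
        set su : Aˣ := (Units.map (algebraMap ℚ A).toMonoidHom) (Units.mk0 s hs0) with hsudef
        have hveq : v = su * u ^ 2 := Units.ext (by
          show (v : A) = algebraMap ℚ A s * ((u ^ 2 : Aˣ) : A)
          rw [Units.val_pow_eq_pow_val]
          exact hs)
        have hsu1 : mk su = 1 := (QuotientGroup.eq_one_iff _).mpr ⟨Units.mk0 s hs0, rfl⟩
        apply hf
        rw [← hv, hveq, map_mul, hsu1, one_mul, map_pow, hu, map_mul, pow_two]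
    have hx3 : x ^ 3 = 1 := hcube x
    have hord : orderOf x = 3 := by
      have hdvd : orderOf x ∣ 3 := orderOf_dvd_of_pow_eq_one hx3
      rcases (Nat.prime_three).eq_one_or_self_of_dvd _ hdvd with h | h
      · exact absurd (orderOf_eq_one_iff.mp h) hx1
      · exact h
    have hzp : ∀ y : G, y ∈ Subgroup.zpowers x := by
      intro y
      rcases hgen y with h | h | h
      · rw [h]; exact Subgroup.one_mem _
      · rw [h]; exact Subgroup.mem_zpowers x
      · rw [h]
        refine ⟨2, ?_⟩
        show x ^ (2 : ℤ) = x * x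
        rw [zpow_two]
    haveI hcyc : IsCyclic G := ⟨⟨x, hzp⟩⟩
    have hcard : Nat.card G = 3 := by
      rw [← orderOf_eq_card_of_forall_mem_zpowers hzp, hord]
    have e : G ≃* Multiplicative (ZMod 3) := by
      exact (zmodCyclicMulEquiv hcyc).symm.trans
        (AddEquiv.toMultiplicative (ZMod.ringEquivCongr hcard).toAddEquiv)
    refine ⟨(AddMonoidHom.toMultiplicative
      (AddMonoidHom.inl (ZMod 3) (ZMod 3))).comp e.toMonoidHom, ?_⟩
    have hinj2 : Function.Injective
        (AddMonoidHom.toMultiplicative (AddMonoidHom.inl (ZMod 3) (ZMod 3))) := by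
      intro p1 p2 hp
      have := congrArg (fun z => (Multiplicative.toAdd z).1) hp
      simpa using this
    exact hinj2.comp e.injective
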